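/- Let g : ℝ → ℂ be a Schwartz function with g(0) = 0 and g'(0) = 0, and let ν be a finite Borel measure on ℝ with ∫ x² dν(x) < ∞. Then the double integral ∫_ℝ ( ∫_ℝ g(x) e^{-iux} dx ) · ( ∫_ℝ (e^{-iux} - 1 + iux) dν(x) ) du is absolutely convergent and equals 2π ∫_ℝ g(-x) dν(x). -/

import Mathlib

open MeasureTheory Real Complex FourierTransform Filter


private lemma hasDerivAt_expI (s : ℝ) :
    HasDerivAt (fun s : ℝ => Complex.exp (Complex.I * s))
      (Complex.I * Complex.exp (Complex.I * s)) s := by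
  have h : HasDerivAt (fun s : ℝ => (Complex.I * s : ℂ)) Complex.I s := by
    simpa using (Complex.ofRealCLM.hasDerivAt (x := s)).const_mul Complex.I
  simpa [mul_comm] using h.cexp

private lemma norm_expI_sub_one_le (t : ℝ) : ‖Complex.exp (Complex.I * t) - 1‖ ≤ |t| := by
  have key := (convex_uIcc (0:ℝ) t).norm_image_sub_le_of_norm_hasDerivWithin_le
      (f' := fun s : ℝ => Complex.I * Complex.exp (Complex.I * s))
      (fun s _ => (hasDerivAt_expI s).hasDerivWithinAt)
      (C := 1) (fun s _ => by simp [Complex.norm_exp]) Set.left_mem_uIcc Set.right_mem_uIcc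
  simpa using key

private lemma norm_expI_sub_one_sub_le (t : ℝ) :
    ‖Complex.exp (Complex.I * t) - 1 - Complex.I * t‖ ≤ t ^ 2 := by
  have key := (convex_uIcc (0:ℝ) t).norm_image_sub_le_of_norm_hasDerivWithin_le
      (f := fun s : ℝ => Complex.exp (Complex.I * s) - Complex.I * s)
      (f' := fun s : ℝ => Complex.I * Complex.exp (Complex.I * s) - Complex.I)
      (fun s _ => ((hasDerivAt_expI s).sub (by
        simpa using (Complex.ofRealCLM.hasDerivAt (x := s)).const_mul Complex.I)).hasDerivWithinAt)
      (C := |t|) ?_ Set.left_mem_uIcc Set.right_mem_uIcc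
  · have : ‖Complex.exp (Complex.I * t) - Complex.I * t - (Complex.exp (Complex.I * 0) - Complex.I * 0)‖
        ≤ |t| * ‖t - 0‖ := by exact_mod_cast key
    simp only [Complex.ofReal_zero, mul_zero, Complex.exp_zero, sub_zero, Real.norm_eq_abs] at this
    calc ‖Complex.exp (Complex.I * t) - 1 - Complex.I * t‖
        = ‖Complex.exp (Complex.I * t) - Complex.I * t - 1‖ := by ring_nf
      _ ≤ |t| * |t| := this
      _ = t ^ 2 := by rw [← abs_mul, abs_mul_self]; ring
  · intro s hs
    have hst : |s| ≤ |t| := by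
      rw [Set.mem_uIcc] at hs
      rw [abs_le]
      rcases hs with ⟨h1, h2⟩ | ⟨h1, h2⟩ <;>
        constructor <;> linarith [le_abs_self t, neg_abs_le t, abs_nonneg t]
    calc ‖Complex.I * Complex.exp (Complex.I * s) - Complex.I‖
        = ‖Complex.I * (Complex.exp (Complex.I * s) - 1)‖ := by ring_nf
      _ = ‖Complex.exp (Complex.I * s) - 1‖ := by
          rw [norm_mul, Complex.norm_I, one_mul]
      _ ≤ |s| := norm_expI_sub_one_le s
      _ ≤ |t| := hst

private lemma norm_k_le (u x : ℝ) :
    ‖Complex.exp (-(Complex.I * u * x)) - 1 + Complex.I * u * x‖ ≤ u ^ 2 * x ^ 2 := by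
  have harg : -(Complex.I * u * x) = Complex.I * ((-(u * x) : ℝ) : ℂ) := by
    push_cast; ring
  have h2 : Complex.exp (-(Complex.I * u * x)) - 1 + Complex.I * u * x
      = Complex.exp (Complex.I * ((-(u * x) : ℝ) : ℂ)) - 1 - Complex.I * ((-(u * x) : ℝ) : ℂ) := by
    rw [← harg]; ring
  rw [h2]
  calc ‖_ - 1 - Complex.I * ((-(u * x) : ℝ) : ℂ)‖ ≤ (-(u * x)) ^ 2 := norm_expI_sub_one_sub_le _
    _ = u ^ 2 * x ^ 2 := by ring


private lemma fourier_inv_aux (h : SchwartzMap ℝ ℂ) (y : ℝ) :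
    𝓕 (𝓕 (⇑h)) y = h (-y) := by
  have hint : Integrable (𝓕 (⇑h)) volume := by
    simpa [SchwartzMap.fourier_coe] using (SchwartzMap.fourierTransformCLM ℝ h).integrable
  have hinv := Continuous.fourierInv_fourier_eq h.continuous h.integrable hint
  have := Real.fourierInv_eq_fourier_neg (𝓕 (⇑h)) (-y)
  rw [neg_neg] at this
  rw [← this, hinv]

private lemma L1 (h : SchwartzMap ℝ ℂ) (x : ℝ) :
    (∫ u : ℝ, 𝓕 (⇑h) (u / (2 * π)) * Complex.exp (-(Complex.I * u * x)))
      = (2 * π : ℂ) * h (-x) := by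
  have h2π : (2 * π : ℝ) ≠ 0 := by positivity
  have hfun : (fun u : ℝ => 𝓕 (⇑h) (u / (2 * π)) *
        Complex.exp (-(Complex.I * u * x)))
      = fun u : ℝ => (fun ξ : ℝ => Complex.exp (((-2 * π * ξ * x : ℝ) : ℂ) * Complex.I) •
          𝓕 (⇑h) ξ) (u / (2 * π)) := by
    funext u
    have harg : (-2 * π * (u / (2 * π)) * x : ℝ) = -(u * x) := by field_simp
    simp only [harg, smul_eq_mul]
    rw [mul_comm]
    congr 1
    push_cast
    ring
  rw [hfun, MeasureTheory.Measure.integral_comp_div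
      (fun ξ : ℝ => Complex.exp (((-2 * π * ξ * x : ℝ) : ℂ) * Complex.I) •
        𝓕 (⇑h) ξ) (2 * π)]
  rw [← Real.fourier_real_eq_integral_exp_smul, fourier_inv_aux h x]
  rw [abs_of_pos (by positivity : (0:ℝ) < 2 * π)]
  rw [Complex.real_smul]
  push_cast
  ring

private noncomputable def FF (g : SchwartzMap ℝ ℂ) : ℝ → ℂ :=
  fun u => 𝓕 (⇑g) (u / (2 * π))

private lemma FF_cont (g : SchwartzMap ℝ ℂ) : Continuous (FF g) := by
  have h : FF g = fun u => (SchwartzMap.fourierTransformCLM ℝ g) (u / (2 * π)) := by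
    funext u; simp [FF, SchwartzMap.fourier_coe]
  rw [h]
  exact (SchwartzMap.fourierTransformCLM ℝ g).continuous.comp (continuous_id.div_const (2 * π))

private lemma FF_int_pow (g : SchwartzMap ℝ ℂ) (n : ℕ) :
    Integrable (fun u : ℝ => |u| ^ n * ‖FF g u‖) volume := by
  have h2π : (2 * π : ℝ) ≠ 0 := by positivity
  have hGfun : ⇑(SchwartzMap.fourierTransformCLM ℝ g) = 𝓕 (⇑g) := by simp [SchwartzMap.fourier_coe]
  have h1 := ((SchwartzMap.fourierTransformCLM ℝ g).integrable_pow_mul volume n).comp_div h2π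
  have h2 := h1.const_mul ((2 * π) ^ n)
  refine h2.congr (Eventually.of_forall fun u => ?_)
  have hn : ‖u / (2 * π)‖ ^ n = |u| ^ n / (2 * π) ^ n := by
    rw [Real.norm_eq_abs, abs_div, abs_of_pos (by positivity : (0:ℝ) < 2 * π), div_pow]
  show (2 * π) ^ n * (‖u / (2 * π)‖ ^ n * ‖(SchwartzMap.fourierTransformCLM ℝ g) (u / (2 * π))‖)
      = |u| ^ n * ‖FF g u‖
  rw [hn, hGfun]
  show (2 * π) ^ n * (|u| ^ n / (2 * π) ^ n * ‖FF g u‖) = |u| ^ n * ‖FF g u‖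
  field_simp

private lemma FF_int (g : SchwartzMap ℝ ℂ) : Integrable (FF g) volume := by
  have h2π : (2 * π : ℝ) ≠ 0 := by positivity
  have h : FF g = fun u => (SchwartzMap.fourierTransformCLM ℝ g) (u / (2 * π)) := by
    funext u; simp [FF, SchwartzMap.fourier_coe]
  rw [h]
  exact (SchwartzMap.fourierTransformCLM ℝ g).integrable.comp_div h2π

private noncomputable def HH (ν : Measure ℝ) : ℝ → ℂ :=
  fun u => ∫ x : ℝ, (Complex.exp (-(Complex.I * u * x)) - 1 + Complex.I * u * x) ∂ν

private lemma k_cont : Continuous (fun p : ℝ × ℝ =>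
    Complex.exp (-(Complex.I * p.1 * p.2)) - 1 + Complex.I * p.1 * p.2) := by
  have h1 : Continuous (fun p : ℝ × ℝ => Complex.I * p.1 * p.2) := by
    apply Continuous.mul
    · exact continuous_const.mul (Complex.continuous_ofReal.comp continuous_fst)
    · exact Complex.continuous_ofReal.comp continuous_snd
  exact ((Complex.continuous_exp.comp h1.neg).sub continuous_const).add h1

private lemma HH_meas (ν : Measure ℝ) [IsFiniteMeasure ν] :
    AEStronglyMeasurable (HH ν) volume :=
  (k_cont.aestronglyMeasurable (μ := volume.prod ν)).integral_prod_right'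

private lemma HH_bound (ν : Measure ℝ) [IsFiniteMeasure ν]
    (hν : Integrable (fun x : ℝ => x ^ 2) ν) (u : ℝ) :
    ‖HH ν u‖ ≤ u ^ 2 * ∫ x : ℝ, x ^ 2 ∂ν := by
  calc ‖HH ν u‖ ≤ ∫ x : ℝ, ‖Complex.exp (-(Complex.I * u * x)) - 1 + Complex.I * u * x‖ ∂ν :=
        norm_integral_le_integral_norm _
    _ ≤ ∫ x : ℝ, u ^ 2 * x ^ 2 ∂ν := by
        refine integral_mono_of_nonneg (Eventually.of_forall fun x => norm_nonneg _)
          (hν.const_mul _) (Eventually.of_forall fun x => ?_)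
        exact norm_k_le u x
    _ = u ^ 2 * ∫ x : ℝ, x ^ 2 ∂ν := integral_const_mul _ _

private lemma main_integrable (g : SchwartzMap ℝ ℂ) (ν : Measure ℝ) [IsFiniteMeasure ν]
    (hν : Integrable (fun x : ℝ => x ^ 2) ν) :
    Integrable (fun u : ℝ => FF g u * HH ν u) volume := by
  have hC : 0 ≤ ∫ x : ℝ, x ^ 2 ∂ν := integral_nonneg fun x => sq_nonneg x
  refine Integrable.mono' ((FF_int_pow g 2).mul_const (∫ x : ℝ, x ^ 2 ∂ν))
    ((FF_cont g).aestronglyMeasurable.mul (HH_meas ν)) (Eventually.of_forall fun u => ?_)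
  rw [norm_mul]
  calc ‖FF g u‖ * ‖HH ν u‖ ≤ ‖FF g u‖ * (u ^ 2 * ∫ x : ℝ, x ^ 2 ∂ν) :=
        mul_le_mul_of_nonneg_left (HH_bound ν hν u) (norm_nonneg _)
    _ = |u| ^ 2 * ‖FF g u‖ * ∫ x : ℝ, x ^ 2 ∂ν := by rw [_root_.sq_abs]; ring

private lemma uFF_int (g : SchwartzMap ℝ ℂ) :
    Integrable (fun u : ℝ => (u : ℂ) * FF g u) volume := by
  refine Integrable.mono' (FF_int_pow g 1)
    ((Complex.continuous_ofReal.mul (FF_cont g)).aestronglyMeasurable)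
    (Eventually.of_forall fun u => ?_)
  rw [norm_mul, Complex.norm_real, Real.norm_eq_abs, pow_one]

private lemma FFexp_int (g : SchwartzMap ℝ ℂ) (x : ℝ) :
    Integrable (fun u : ℝ => FF g u * Complex.exp (-(Complex.I * u * x))) volume := by
  have hc : Continuous (fun u : ℝ => Complex.exp (-(Complex.I * u * x))) := by
    exact Complex.continuous_exp.comp
      (((continuous_const.mul Complex.continuous_ofReal).mul continuous_const).neg)
  refine Integrable.mono' (FF_int g).norm
    (((FF_cont g).mul hc).aestronglyMeasurable) (Eventually.of_forall fun u => ?_)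
  rw [norm_mul]
  have h1 : ‖Complex.exp (-(Complex.I * u * x))‖ = 1 := by
    rw [Complex.norm_exp]
    simp
  rw [h1, mul_one]

private lemma FF_integral_zero (g : SchwartzMap ℝ ℂ) (hg0 : g 0 = 0) :
    ∫ u : ℝ, FF g u = 0 := by
  have h := L1 g 0
  simp only [Complex.ofReal_zero, mul_zero, neg_zero, Complex.exp_zero, mul_one] at h
  rw [hg0, mul_zero] at h
  exact h

private lemma uFF_integral_zero (g : SchwartzMap ℝ ℂ)
    (hg0' : deriv (fun x : ℝ => g x) 0 = 0) :
    ∫ u : ℝ, (u : ℂ) * FF g u = 0 := by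
  have h2π : (2 * π : ℝ) ≠ 0 := by positivity
  have h2πC : ((2 * π : ℝ) : ℂ) ≠ 0 := Complex.ofReal_ne_zero.mpr h2π
  set d : SchwartzMap ℝ ℂ := SchwartzMap.derivCLM ℝ ℂ g with hdset
  have hd : ⇑d = deriv (⇑g) := by
    funext y; exact SchwartzMap.derivCLM_apply ℝ g y
  have hderiv : 𝓕 (deriv (⇑g))
      = fun ξ : ℝ => (2 * π * Complex.I * ξ) • 𝓕 (⇑g) ξ :=
    Real.fourier_deriv g.integrable g.differentiable (hd ▸ d.integrable)
  have hFd : (fun u : ℝ => 𝓕 (⇑d) (u / (2 * π)))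
      = fun u : ℝ => Complex.I * ((u : ℂ) * FF g u) := by
    funext u
    rw [hd, hderiv]
    simp only [smul_eq_mul, FF]
    have hπC : ((π : ℝ) : ℂ) ≠ 0 := Complex.ofReal_ne_zero.mpr pi_ne_zero
    have harg : (2 * (π : ℂ) * Complex.I * (((u / (2 * π) : ℝ)) : ℂ)) = Complex.I * u := by
      push_cast
      field_simp
    rw [harg]
    ring
  have hL := L1 d 0
  simp only [Complex.ofReal_zero, mul_zero, neg_zero, Complex.exp_zero, mul_one] at hL
  rw [hFd] at hL
  have hd0 : d 0 = 0 := by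
    rw [hdset, SchwartzMap.derivCLM_apply]
    exact hg0'
  rw [hd0, mul_zero, integral_const_mul] at hL
  rcases mul_eq_zero.mp hL with h | h
  · exact absurd h Complex.I_ne_zero
  · exact h

private lemma step3 (g : SchwartzMap ℝ ℂ) (hg0 : g 0 = 0)
    (hg0' : deriv (fun x : ℝ => g x) 0 = 0) (x : ℝ) :
    (∫ u : ℝ, FF g u * (Complex.exp (-(Complex.I * u * x)) - 1 + Complex.I * u * x))
      = (2 * π : ℂ) * g (-x) := by
  have int1 := FFexp_int g x
  have int2 := FF_int g
  have int3 := (uFF_int g).const_mul (Complex.I * x)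
  have hsplit : (fun u : ℝ =>
      FF g u * (Complex.exp (-(Complex.I * u * x)) - 1 + Complex.I * u * x))
      = fun u : ℝ => (FF g u * Complex.exp (-(Complex.I * u * x)) - FF g u)
          + (Complex.I * x) * ((u : ℂ) * FF g u) := by
    funext u; ring
  have int12 : Integrable (fun u : ℝ =>
      FF g u * Complex.exp (-(Complex.I * u * x)) - FF g u) volume := int1.sub int2
  have int3' : Integrable (fun u : ℝ =>
      (Complex.I * x) * ((u : ℂ) * FF g u)) volume := int3
  rw [hsplit, integral_add int12 int3', integral_sub int1 int2, integral_const_mul]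
  have hv1 : (∫ u : ℝ, FF g u * Complex.exp (-(Complex.I * u * x)))
      = (2 * π : ℂ) * g (-x) := L1 g x
  rw [hv1, FF_integral_zero g hg0, uFF_integral_zero g hg0', mul_zero, sub_zero, add_zero]

private lemma main_value (g : SchwartzMap ℝ ℂ) (hg0 : g 0 = 0)
    (hg0' : deriv (fun x : ℝ => g x) 0 = 0)
    (ν : Measure ℝ) [IsFiniteMeasure ν] (hν : Integrable (fun x : ℝ => x ^ 2) ν) :
    (∫ u : ℝ, FF g u * HH ν u) = (2 * π : ℂ) * ∫ x : ℝ, g (-x) ∂ν := by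
  have hKK : Integrable (Function.uncurry fun (u x : ℝ) =>
      FF g u * (Complex.exp (-(Complex.I * u * x)) - 1 + Complex.I * u * x))
      (volume.prod ν) := by
    refine Integrable.mono' ((FF_int_pow g 2).mul_prod hν)
      ((((FF_cont g).comp continuous_fst).mul k_cont).aestronglyMeasurable)
      (Eventually.of_forall fun p => ?_)
    show ‖FF g p.1 * (Complex.exp (-(Complex.I * p.1 * p.2)) - 1 + Complex.I * p.1 * p.2)‖
        ≤ |p.1| ^ 2 * ‖FF g p.1‖ * p.2 ^ 2
    rw [norm_mul]
    calc ‖FF g p.1‖ * ‖Complex.exp (-(Complex.I * p.1 * p.2)) - 1 + Complex.I * p.1 * p.2‖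
        ≤ ‖FF g p.1‖ * (p.1 ^ 2 * p.2 ^ 2) :=
          mul_le_mul_of_nonneg_left (norm_k_le p.1 p.2) (norm_nonneg _)
      _ = |p.1| ^ 2 * ‖FF g p.1‖ * p.2 ^ 2 := by rw [_root_.sq_abs]; ring
  calc (∫ u : ℝ, FF g u * HH ν u)
      = ∫ u : ℝ, ∫ x : ℝ,
          FF g u * (Complex.exp (-(Complex.I * u * x)) - 1 + Complex.I * u * x) ∂ν := by
        refine integral_congr_ae (Eventually.of_forall fun u => ?_)
        exact (integral_const_mul _ _).symm
    _ = ∫ x : ℝ, (∫ u : ℝ,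
          FF g u * (Complex.exp (-(Complex.I * u * x)) - 1 + Complex.I * u * x)) ∂ν :=
        integral_integral_swap hKK
    _ = ∫ x : ℝ, (2 * π : ℂ) * g (-x) ∂ν := by
        refine integral_congr_ae (Eventually.of_forall fun x => ?_)
        exact step3 g hg0 hg0' x
    _ = (2 * π : ℂ) * ∫ x : ℝ, g (-x) ∂ν := integral_const_mul _ _

private lemma key0 (g : SchwartzMap ℝ ℂ) (u : ℝ) :
    (∫ x : ℝ, g x * Complex.exp (-(Complex.I * u * x))) = FF g u := by
  show _ = 𝓕 (⇑g) (u / (2 * π))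
  rw [Real.fourier_real_eq_integral_exp_smul]
  refine integral_congr_ae (Eventually.of_forall fun x => ?_)
  show g x * Complex.exp (-(Complex.I * u * x))
      = Complex.exp (((-2 * π * x * (u / (2 * π)) : ℝ) : ℂ) * Complex.I) • g x
  rw [smul_eq_mul, mul_comm (g x)]
  congr 1
  rw [show (-2 * π * x * (u / (2 * π)) : ℝ) = -(u * x) by field_simp]
  push_cast
  ring

theorem fourier_parseval_identity (g : SchwartzMap ℝ ℂ)
    (hg0 : g 0 = 0) (hg0' : deriv (fun x : ℝ => g x) 0 = 0)
    (ν : Measure ℝ) [IsFiniteMeasure ν]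
    (hν : Integrable (fun x : ℝ => x ^ 2) ν) :
    Integrable (fun u : ℝ =>
        (∫ x : ℝ, g x * Complex.exp (-(Complex.I * u * x))) *
          (∫ x : ℝ, (Complex.exp (-(Complex.I * u * x)) - 1 + Complex.I * u * x) ∂ν))
      volume ∧
    (∫ u : ℝ,
        (∫ x : ℝ, g x * Complex.exp (-(Complex.I * u * x))) *
          (∫ x : ℝ, (Complex.exp (-(Complex.I * u * x)) - 1 + Complex.I * u * x) ∂ν)) =
      (2 * Real.pi : ℂ) * ∫ x : ℝ, g (-x) ∂ν := by
  have hprod : (fun u : ℝ =>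
      (∫ x : ℝ, g x * Complex.exp (-(Complex.I * u * x))) *
        (∫ x : ℝ, (Complex.exp (-(Complex.I * u * x)) - 1 + Complex.I * u * x) ∂ν))
      = fun u : ℝ => FF g u * HH ν u := by
    funext u
    rw [key0 g u]
    rfl
  rw [hprod]
  exact ⟨main_integrable g ν hν, by rw [main_value g hg0 hg0' ν hν]⟩
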